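/- Let V be a finite-dimensional real inner product space with norm ‖·‖, let Z : V → ℂ be an ℝ-linear map, and let S ⊆ V be any subset. Then the following are equivalent: (i) there exists C > 0 such that ‖v‖ ≤ C·|Z(v)| for all v ∈ S; (ii) there exists a quadratic form Q on V such that Q(v) < 0 for every nonzero v ∈ ker Z, and Q(v) ≥ 0 for every v ∈ S. -/

import Mathlib

-- continuity of a quadratic form in finite dimensions
lemma QuadraticMap.continuous_fd {V : Type*} [NormedAddCommGroup V] [NormedSpace ℝ V]
    [FiniteDimensional ℝ V] (Q : QuadraticForm ℝ V) : Continuous fun v => Q v := by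
  set B : V →ₗ[ℝ] V →ₗ[ℝ] ℝ := QuadraticMap.associated (R := ℝ) Q
  have hB : ∀ v, Q v = B v v := by
    intro v
    have := congrArg (fun q => QuadraticMap.toFun q v) (QuadraticMap.toQuadraticMap_associated ℝ Q)
    simpa [LinearMap.BilinMap.toQuadraticMap] using this.symm
  have : Continuous fun v => (LinearMap.toContinuousLinearMap.toLinearMap.comp B) v v := by
    exact isBoundedBilinearMap_apply.continuous.comp
      (((LinearMap.toContinuousLinearMap.toLinearMap.comp B).continuous_of_finiteDimensional).prodMk
        continuous_id)
  simpa [hB] using this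

/-- Lemma A.4 of the paper: equivalence of the two forms of the
support property.  `V` is a finite-dimensional real inner product space, `Z : V → ℂ`
ℝ-linear, `S ⊆ V`.  Then: (i) there is `C > 0` with `‖v‖ ≤ C·|Z(v)|` for all `v ∈ S`
iff (ii) there is a quadratic form `Q` on `V` which is negative definite on `ker Z`
and nonnegative on `S`. -/
theorem stmt_6 (V : Type*) [NormedAddCommGroup V] [InnerProductSpace ℝ V]
    [FiniteDimensional ℝ V] (Z : V →ₗ[ℝ] ℂ) (S : Set V) :
    (∃ C : ℝ, 0 < C ∧ ∀ v ∈ S, ‖v‖ ≤ C * ‖Z v‖) ↔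
      (∃ Q : QuadraticForm ℝ V,
        (∀ v : V, Z v = 0 → v ≠ 0 → Q v < 0) ∧ ∀ v ∈ S, 0 ≤ Q v) := by
  constructor
  · rintro ⟨C, hC, hS⟩
    set reZ : V →ₗ[ℝ] ℝ := Complex.reLm.comp Z
    set imZ : V →ₗ[ℝ] ℝ := Complex.imLm.comp Z
    set Q0 : QuadraticForm ℝ V := (C^2) • (QuadraticMap.sq.comp reZ + QuadraticMap.sq.comp imZ)
        - LinearMap.BilinMap.toQuadraticMap (innerₗ V) with hQ0
    have hQ0v : ∀ v : V, Q0 v = C^2 * ((Z v).re^2 + (Z v).im^2) - ‖v‖^2 := by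
      intro v
      simp [hQ0, QuadraticMap.sq, reZ, imZ, LinearMap.BilinMap.toQuadraticMap,
        innerₗ, real_inner_self_eq_norm_sq, mul_add, sq]
      exact real_inner_self_eq_norm_mul_norm v
    refine ⟨Q0, ?_, ?_⟩ <;> intro v
    · intro hv hne
      rw [hQ0v, hv]
      simp only [Complex.zero_re, Complex.zero_im]
      have : 0 < ‖v‖^2 := pow_pos (norm_pos_iff.mpr hne) 2
      nlinarith
    · intro hvS
      have h := hS v hvS
      rw [hQ0v]
      have habs : (‖Z v‖)^2 = (Z v).re^2 + (Z v).im^2 := by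
        rw [Complex.sq_norm, Complex.normSq_apply]; ring
      have h2 : ‖v‖^2 ≤ (C * ‖Z v‖)^2 := by
        apply sq_le_sq' <;> nlinarith [norm_nonneg v]
      nlinarith [habs]
  · rintro ⟨Q, hker, hQS⟩
    by_cases hS0 : S ⊆ {0}
    · refine ⟨1, one_pos, fun v hv => ?_⟩
      have hv0 : v = 0 := hS0 hv
      simp [hv0]
    set K : Set V := {u | ‖u‖ = 1 ∧ 0 ≤ Q u}
    have hKclosed : IsClosed K :=
      ((isClosed_eq continuous_norm continuous_const).inter
        (isClosed_le continuous_const (Q.continuous_fd)))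
    have hKcpt : IsCompact K := by
      have : IsCompact (Metric.sphere (0:V) 1) := isCompact_sphere 0 1
      refine this.of_isClosed_subset hKclosed ?_
      intro u hu; simpa [mem_sphere_iff_norm] using hu.1
    have hKne : K.Nonempty := by
      obtain ⟨v, hvS, hvne⟩ : ∃ v ∈ S, v ≠ 0 := by
        by_contra h; push_neg at h
        exact hS0 fun v hv => h v hv
      refine ⟨‖v‖⁻¹ • v, ?_, ?_⟩
      · simp [norm_smul, abs_of_nonneg, inv_mul_cancel₀ (norm_ne_zero_iff.mpr hvne),
          norm_ne_zero_iff.mpr hvne]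
      · have := Q.map_smul (‖v‖⁻¹) v
        rw [this]
        have : (0:ℝ) ≤ ‖v‖⁻¹ * ‖v‖⁻¹ := by positivity
        exact mul_nonneg (by positivity) (hQS v hvS)
    obtain ⟨u₀, hu₀K, hmin⟩ := hKcpt.exists_isMinOn hKne
      (Continuous.continuousOn (continuous_norm.comp Z.continuous_of_finiteDimensional))
    set ε := ‖Z u₀‖
    have hε : 0 < ε := by
      rcases lt_or_eq_of_le (norm_nonneg (Z u₀)) with h | h
      · exact h
      · exfalso
        have hz : Z u₀ = 0 := by
          have := h.symm; rwa [norm_eq_zero] at this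
        have hne : u₀ ≠ 0 :=
          norm_ne_zero_iff.mp (by rw [hu₀K.1]; exact one_ne_zero)
        exact absurd hu₀K.2 (not_le.mpr (hker u₀ hz hne))
    refine ⟨ε⁻¹, by positivity, fun v hvS => ?_⟩
    by_cases hv0 : v = 0
    · simp [hv0]
    · have hnv : (0:ℝ) < ‖v‖ := norm_pos_iff.mpr hv0
      have hmem : ‖v‖⁻¹ • v ∈ K := by
        constructor
        · simp [norm_smul, abs_of_nonneg, inv_mul_cancel₀ hnv.ne']
        · rw [Q.map_smul]
          exact mul_nonneg (by positivity) (hQS v hvS)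
      have hle : ε ≤ ‖Z (‖v‖⁻¹ • v)‖ := hmin hmem
      have habs : ‖Z (‖v‖⁻¹ • v)‖ = ‖v‖⁻¹ * ‖Z v‖ := by
        rw [map_smul]
        simp [abs_of_nonneg, hnv.le, norm_smul]
      rw [habs] at hle
      have : ε * ‖v‖ ≤ ‖Z v‖ := by
        have := mul_le_mul_of_nonneg_right hle hnv.le
        rwa [inv_mul_eq_div, div_mul_cancel₀ _ hnv.ne'] at this
      calc ‖v‖ = ε⁻¹ * (ε * ‖v‖) := by field_simp
        _ ≤ ε⁻¹ * ‖Z v‖ := by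
            exact mul_le_mul_of_nonneg_left this (by positivity)
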